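/- Let Ω ⊂ ℝ^d be compact, x₀ ∈ Ω, p, q > 0; set s = p/d, α = s/(1+s), β = 1/(1+s), A = (1+s)·(2/s)^α. Let ρ : Ω → [0,∞) be integrable. Then for every sequence ε_n → 0⁺ and every sequence (μ_n) of Borel probability measures on Ω converging weakly to δ_{x₀}, one has liminf_{n→∞} G_{ε_n}(μ_n) ≥ A · ∫_Ω ρ(x)^β · |x−x₀|^{α·q} dx, where G_ε(μ) = ε^α ∫_Ω ρ(x)·u(x)^{−s} dx + ε^{−β} ∫_{Ω×Ω} |x−y|^q dμ(x) dμ(y) and u = dμ/dLeb is the density of the absolutely continuous part of μ. -/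

import Mathlib

open MeasureTheory Filter Topology
open scoped ENNReal

lemma amgm_real {s α β : ℝ} (hs : 0 < s) (hα : α = s/(1+s)) (hβ : β = 1/(1+s))
    {a b r : ℝ} (ha : 0 ≤ a) (hb : 0 ≤ b) (hr : 0 < r) :
    (1+s) * s^(-α) * (a^β * b^α) ≤ a * r^(-s) + b * r := by
  have h1s : (0:ℝ) < 1 + s := by linarith
  have hα0 : 0 < α := by rw [hα]; positivity
  have hβ0 : 0 < β := by rw [hβ]; positivity
  have hsum : β + α = 1 := by rw [hα, hβ]; field_simp
  have hrs : (0:ℝ) ≤ r ^ (-s) := Real.rpow_nonneg hr.le _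
  have hp₁ : 0 ≤ a * r^(-s) / β := by positivity
  have hp₂ : 0 ≤ b * r / α := by positivity
  have key := Real.geom_mean_le_arith_mean2_weighted hβ0.le hα0.le hp₁ hp₂ hsum
  have hRHS : β * (a * r^(-s) / β) + α * (b * r / α) = a * r^(-s) + b * r := by
    field_simp
  rw [hRHS] at key
  refine le_trans (le_of_eq ?_) key
  have hsβ : s * β = α := by rw [hα, hβ]; ring
  have e1 : (a * r^(-s)/β)^β = a^β * r^(-α) / β^β := by
    rw [Real.div_rpow (by positivity) hβ0.le, Real.mul_rpow ha hrs,
      ← Real.rpow_mul hr.le]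
    congr 1
    rw [show -s * β = -α by rw [← hsβ]; ring]
  have e2 : (b*r/α)^α = b^α * r^α / α^α := by
    rw [Real.div_rpow (by positivity) hα0.le, Real.mul_rpow hb hr.le]
  rw [e1, e2]
  have hr1 : r^(-α) * r^α = 1 := by
    rw [← Real.rpow_add hr]; simp
  have hββ : β^β = (1+s)^(-β) := by
    rw [hβ, one_div, Real.inv_rpow h1s.le, ← Real.rpow_neg h1s.le]
  have hαα : α^α = s^α * (1+s)^(-α) := by
    rw [hα, Real.div_rpow hs.le h1s.le, div_eq_mul_inv, ← Real.rpow_neg h1s.le]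
  have hconst : β^β * α^α * ((1+s) * s^(-α)) = 1 := by
    rw [hββ, hαα, Real.rpow_neg hs.le]
    have hsα : s^α ≠ 0 := (Real.rpow_pos_of_pos hs _).ne'
    have h3 : (1+s)^(-β) * (1+s)^(-α) = ((1+s))⁻¹ := by
      rw [← Real.rpow_add h1s, show -β + -α = -1 by linarith, Real.rpow_neg_one]
    have h4 : (1+s)⁻¹ * (1+s) = 1 := inv_mul_cancel₀ h1s.ne'
    have h5 : s^α * (s^α)⁻¹ = 1 := mul_inv_cancel₀ hsα
    linear_combination (s^α*(1+s)*(s^α)⁻¹)*h3 + (s^α*(s^α)⁻¹)*h4 + h5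
  have hne : β^β * α^α ≠ 0 :=
    (mul_pos (Real.rpow_pos_of_pos hβ0 _) (Real.rpow_pos_of_pos hα0 _)).ne'
  have : a^β * r^(-α)/β^β * (b^α * r^α/α^α) = (a^β*b^α) * (r^(-α)*r^α) / (β^β*α^α) := by
    ring
  rw [this, hr1, eq_div_iff hne]
  linear_combination (a^β*b^α) * hconst

lemma amgm_ennreal {s α β : ℝ} (hs : 0 < s) (hα : α = s/(1+s)) (hβ : β = 1/(1+s))
    {a b : ℝ} (ha : 0 ≤ a) (hb : 0 ≤ b) (t : ℝ≥0∞) :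
    ENNReal.ofReal ((1+s) * s^(-α) * (a^β * b^α)) ≤
      ENNReal.ofReal a * t ^ (-s) + ENNReal.ofReal b * t := by
  have h1s : (0:ℝ) < 1 + s := by linarith
  have hα0 : 0 < α := by rw [hα]; positivity
  have hβ0 : 0 < β := by rw [hβ]; positivity
  rcases eq_or_lt_of_le ha with ha0 | hapos
  · rw [← ha0, Real.zero_rpow hβ0.ne', zero_mul, mul_zero, ENNReal.ofReal_zero]
    exact bot_le
  rcases eq_or_ne t 0 with rfl | ht0
  · have : (0:ℝ≥0∞) ^ (-s) = ⊤ := ENNReal.zero_rpow_of_neg (by linarith)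
    rw [this, ENNReal.mul_top (by simpa using hapos)]
    exact le_top.trans (le_add_right le_rfl)
  rcases eq_or_ne t ⊤ with rfl | htop
  · rcases eq_or_lt_of_le hb with hb0 | hbpos
    · rw [← hb0, Real.zero_rpow hα0.ne', mul_zero, mul_zero, ENNReal.ofReal_zero]
      exact bot_le
    · rw [ENNReal.mul_top (by simpa using hbpos)]
      exact le_top.trans (le_add_left le_rfl)
  · set r := t.toReal with hrdef
    have hrpos : 0 < r := ENNReal.toReal_pos ht0 htop
    have htr : t = ENNReal.ofReal r := (ENNReal.ofReal_toReal htop).symm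
    rw [htr, ENNReal.ofReal_rpow_of_pos hrpos, ← ENNReal.ofReal_mul ha,
      ← ENNReal.ofReal_mul hb, ← ENNReal.ofReal_add (by positivity) (by positivity)]
    exact ENNReal.ofReal_le_ofReal (amgm_real hs hα hβ ha hb hrpos)

lemma perN {d : ℕ} {Ω : Set (EuclideanSpace ℝ (Fin d))} (hΩm : MeasurableSet Ω)
    (x₀ : EuclideanSpace ℝ (Fin d)) {q s α β : ℝ} (hq : 0 < q) (hs : 0 < s)
    (hα : α = s/(1+s)) (hβ : β = 1/(1+s))
    {ρ : EuclideanSpace ℝ (Fin d) → ℝ} (hρ0 : ∀ x ∈ Ω, 0 ≤ ρ x)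
    (hρm : AEMeasurable ρ (volume.restrict Ω))
    (ν : Measure (EuclideanSpace ℝ (Fin d))) [IsProbabilityMeasure ν]
    {ε δ : ℝ} (hε : 0 < ε) (hδ : 0 < δ) :
    ENNReal.ofReal ((1+s) * s^(-α) * (2 * (ν (Metric.ball x₀ δ)).toReal)^α) *
        (∫⁻ x in Ω, ENNReal.ofReal (ρ x ^ β * (max (dist x x₀ - δ) 0) ^ (α*q))) ≤
      ENNReal.ofReal (ε^α) * (∫⁻ x in Ω, ENNReal.ofReal (ρ x) * (ν.rnDeriv volume x) ^ (-s))
        + ENNReal.ofReal (ε^(-β)) * ∫⁻ x, ∫⁻ y, ENNReal.ofReal (dist x y ^ q) ∂ν ∂ν := by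
  have h1s : (0:ℝ) < 1 + s := by linarith
  have hα0 : 0 < α := by rw [hα]; positivity
  have hβ0 : 0 < β := by rw [hβ]; positivity
  set B := Metric.ball x₀ δ with hBdef
  set m' := (ν B).toReal with hm'def
  have hm'0 : 0 ≤ m' := ENNReal.toReal_nonneg
  have hνB : ν B = ENNReal.ofReal m' := (ENNReal.ofReal_toReal (measure_ne_top ν B)).symm
  set u := ν.rnDeriv volume with hudef
  have hum : Measurable u := ν.measurable_rnDeriv volume
  set c : EuclideanSpace ℝ (Fin d) → ℝ := fun x => (max (dist x x₀ - δ) 0) ^ q with hcdef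
  have hc0 : ∀ x, 0 ≤ c x := fun x => Real.rpow_nonneg (le_max_right _ _) _
  have hcB : ∀ x ∈ B, c x = 0 := by
    intro x hx
    have h1 : dist x x₀ < δ := Metric.mem_ball.mp hx
    simp only [hcdef]
    rw [max_eq_right (by linarith : dist x x₀ - δ ≤ 0), Real.zero_rpow hq.ne']
  have hcmeas : Measurable c := by
    have : Measurable fun x : EuclideanSpace ℝ (Fin d) => max (dist x x₀ - δ) 0 :=
      (((continuous_id.dist continuous_const).sub continuous_const).max
        continuous_const).measurable
    exact this.pow measurable_const
  set F : EuclideanSpace ℝ (Fin d) → ℝ≥0∞ :=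
    fun x => ∫⁻ y, ENNReal.ofReal (dist x y ^ q) ∂ν with hFdef
  set J := ∫⁻ y, ENNReal.ofReal (c y) ∂ν with hJdef
  have hFB : ∀ x ∈ B, J ≤ F x := by
    intro x hx
    refine lintegral_mono fun y => ENNReal.ofReal_le_ofReal ?_
    refine Real.rpow_le_rpow (le_max_right _ _) ?_ hq.le
    have h1 := dist_triangle y x x₀
    have h2 : dist x x₀ < δ := Metric.mem_ball.mp hx
    refine max_le ?_ dist_nonneg
    rw [dist_comm x y]; linarith
  have hFC : ∀ x, ENNReal.ofReal (c x) * ν B ≤ F x := by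
    intro x
    calc ENNReal.ofReal (c x) * ν B = ∫⁻ _ in B, ENNReal.ofReal (c x) ∂ν :=
          (setLIntegral_const _ _).symm
      _ ≤ ∫⁻ y in B, ENNReal.ofReal (dist x y ^ q) ∂ν := by
          refine lintegral_mono_ae
            (ae_restrict_of_forall_mem measurableSet_ball fun y hy => ?_)
          refine ENNReal.ofReal_le_ofReal (Real.rpow_le_rpow (le_max_right _ _) ?_ hq.le)
          have h1 := dist_triangle x y x₀
          have h2 : dist y x₀ < δ := Metric.mem_ball.mp hy
          refine max_le ?_ dist_nonneg
          linarith
      _ ≤ F x := setLIntegral_le_lintegral _ _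
  -- lower bound for J in terms of the density
  set X := ∫⁻ x in Ω, ENNReal.ofReal (c x) * u x with hXdef
  have hJ1 : X ≤ J := by
    calc X ≤ ∫⁻ x, ENNReal.ofReal (c x) * u x := setLIntegral_le_lintegral _ _
      _ = ∫⁻ x, ENNReal.ofReal (c x) ∂(volume.withDensity u) := by
          rw [lintegral_withDensity_eq_lintegral_mul volume hum
            (show Measurable fun x => ENNReal.ofReal (c x) from hcmeas.ennreal_ofReal)]
          exact lintegral_congr fun x => mul_comm _ _
      _ ≤ J := lintegral_mono' (Measure.withDensity_rnDeriv_le ν volume) le_rfl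
  -- double integral lower bound
  have hD : ENNReal.ofReal (2*m') * X ≤ ∫⁻ x, F x ∂ν := by
    have hsplit : (∫⁻ x in B, F x ∂ν) + (∫⁻ x in Bᶜ, F x ∂ν) = ∫⁻ x, F x ∂ν :=
      lintegral_add_compl F measurableSet_ball
    have part1 : ν B * J ≤ ∫⁻ x in B, F x ∂ν := by
      calc ν B * J = ∫⁻ _ in B, J ∂ν := by rw [setLIntegral_const, mul_comm]
        _ ≤ ∫⁻ x in B, F x ∂ν :=
          lintegral_mono_ae (ae_restrict_of_forall_mem measurableSet_ball hFB)
    have hJc : ∫⁻ x in Bᶜ, ENNReal.ofReal (c x) ∂ν = J := by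
      have hz : ∫⁻ x in B, ENNReal.ofReal (c x) ∂ν = 0 := by
        have : ∫⁻ x in B, ENNReal.ofReal (c x) ∂ν ≤ ∫⁻ _ in B, 0 ∂ν :=
          lintegral_mono_ae (ae_restrict_of_forall_mem measurableSet_ball
            fun x hx => by simp [hcB x hx])
        simpa using this
      have h : (∫⁻ x in B, ENNReal.ofReal (c x) ∂ν) + (∫⁻ x in Bᶜ, ENNReal.ofReal (c x) ∂ν)
          = ∫⁻ x, ENNReal.ofReal (c x) ∂ν := lintegral_add_compl _ measurableSet_ball
      rw [hJdef, ← h, hz, zero_add]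
    have part2 : ν B * J ≤ ∫⁻ x in Bᶜ, F x ∂ν := by
      calc ν B * J = ∫⁻ x in Bᶜ, ν B * ENNReal.ofReal (c x) ∂ν := by
            rw [lintegral_const_mul' _ _ (measure_ne_top ν B), hJc]
        _ ≤ ∫⁻ x in Bᶜ, F x ∂ν :=
            lintegral_mono fun x => by rw [mul_comm]; exact hFC x
    have h2m : ENNReal.ofReal (2*m') = 2 * ν B := by
      rw [ENNReal.ofReal_mul (by norm_num : (0:ℝ) ≤ 2), hνB]
      norm_num
    calc ENNReal.ofReal (2*m') * X = 2 * (ν B * X) := by rw [h2m]; ring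
      _ ≤ 2 * (ν B * J) := by
          exact mul_le_mul_right (mul_le_mul_right hJ1 _) _
      _ = ν B * J + ν B * J := by ring
      _ ≤ (∫⁻ x in B, F x ∂ν) + (∫⁻ x in Bᶜ, F x ∂ν) := add_le_add part1 part2
      _ = ∫⁻ x, F x ∂ν := hsplit
  -- combine pointwise via AM-GM
  set f : EuclideanSpace ℝ (Fin d) → ℝ≥0∞ :=
    fun x => ENNReal.ofReal (ε^α) * (ENNReal.ofReal (ρ x) * u x ^ (-s)) with hfdef
  set g : EuclideanSpace ℝ (Fin d) → ℝ≥0∞ :=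
    fun x => (ENNReal.ofReal (ε^(-β)) * ENNReal.ofReal (2*m')) *
      (ENNReal.ofReal (c x) * u x) with hgdef
  have hf_meas : AEMeasurable f (volume.restrict Ω) := by
    exact ((hρm.ennreal_ofReal.mul (hum.pow measurable_const).aemeasurable)).const_mul _
  have hae : ∀ᵐ x ∂(volume.restrict Ω),
      ENNReal.ofReal ((1+s)*s^(-α)*(2*m')^α * (ρ x ^ β * (max (dist x x₀ - δ) 0) ^ (α*q)))
        ≤ f x + g x := by
    filter_upwards [ae_restrict_of_forall_mem hΩm hρ0] with x hρx
    have hfx : f x = ENNReal.ofReal (ε^α * ρ x) * u x ^ (-s) := by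
      simp only [hfdef]
      rw [ENNReal.ofReal_mul (Real.rpow_nonneg hε.le _), mul_assoc]
    have hgx : g x = ENNReal.ofReal (ε^(-β) * (2*m') * c x) * u x := by
      simp only [hgdef]
      rw [ENNReal.ofReal_mul (by positivity : (0:ℝ) ≤ ε^(-β) * (2*m')),
        ENNReal.ofReal_mul (Real.rpow_nonneg hε.le _)]
      ring
    rw [hfx, hgx]
    refine le_trans (le_of_eq ?_)
      (amgm_ennreal hs hα hβ (a := ε^α * ρ x) (b := ε^(-β)*(2*m')*c x)
        (mul_nonneg (Real.rpow_nonneg hε.le _) hρx) (by positivity) (u x))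
    congr 1
    have hx1 : (ε^α * ρ x)^β = (ε^α)^β * ρ x^β :=
      Real.mul_rpow (Real.rpow_nonneg hε.le _) hρx
    have hx2 : (ε^(-β)*(2*m')*c x)^α = (ε^(-β))^α * (2*m')^α * c x^α := by
      rw [Real.mul_rpow (mul_nonneg (Real.rpow_nonneg hε.le _) (by positivity)) (hc0 x),
        Real.mul_rpow (Real.rpow_nonneg hε.le _) (by positivity)]
    have hx3 : c x ^ α = (max (dist x x₀ - δ) 0) ^ (α*q) := by
      simp only [hcdef]
      rw [← Real.rpow_mul (le_max_right _ _), mul_comm q α]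
    have hε1 : (ε^α)^β * (ε^(-β))^α = 1 := by
      rw [← Real.rpow_mul hε.le, ← Real.rpow_mul hε.le, ← Real.rpow_add hε,
        show α*β + (-β)*α = 0 by ring, Real.rpow_zero]
    rw [hx1, hx2, hx3]
    linear_combination (-(1+s)*s^(-α)*(2*m')^α*(ρ x^β *
      (max (dist x x₀ - δ) 0)^(α*q))) * hε1
  calc ENNReal.ofReal ((1+s) * s^(-α) * (2*m')^α) *
        (∫⁻ x in Ω, ENNReal.ofReal (ρ x ^ β * (max (dist x x₀ - δ) 0) ^ (α*q)))
      = ∫⁻ x in Ω, ENNReal.ofReal ((1+s)*s^(-α)*(2*m')^α *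
          (ρ x ^ β * (max (dist x x₀ - δ) 0) ^ (α*q))) := by
        rw [← lintegral_const_mul' _ _ ENNReal.ofReal_ne_top]
        exact lintegral_congr fun x =>
          (ENNReal.ofReal_mul (by positivity)).symm
    _ ≤ ∫⁻ x in Ω, (f x + g x) := lintegral_mono_ae hae
    _ = (∫⁻ x in Ω, f x) + ∫⁻ x in Ω, g x := lintegral_add_left' hf_meas _
    _ = ENNReal.ofReal (ε^α) * (∫⁻ x in Ω, ENNReal.ofReal (ρ x) * u x ^ (-s))
        + ENNReal.ofReal (ε^(-β)) * (ENNReal.ofReal (2*m') * X) := by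
        simp only [hfdef, hgdef]
        rw [lintegral_const_mul' _ _ ENNReal.ofReal_ne_top,
          lintegral_const_mul' _ _ (by finiteness : ENNReal.ofReal (ε^(-β)) * ENNReal.ofReal (2*m') ≠ ⊤),
          hXdef, mul_assoc]
    _ ≤ ENNReal.ofReal (ε^α) * (∫⁻ x in Ω, ENNReal.ofReal (ρ x) * u x ^ (-s))
        + ENNReal.ofReal (ε^(-β)) * ∫⁻ x, F x ∂ν :=
        add_le_add le_rfl (by exact mul_le_mul_right hD _)


lemma ball_mass {d : ℕ} {x₀ : EuclideanSpace ℝ (Fin d)}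
    (μ : ℕ → Measure (EuclideanSpace ℝ (Fin d)))
    (hμprob : ∀ n, IsProbabilityMeasure (μ n))
    (hweak : ∀ f : BoundedContinuousFunction (EuclideanSpace ℝ (Fin d)) ℝ,
      Tendsto (fun n => ∫ x, f x ∂(μ n)) atTop (𝓝 (f x₀)))
    {δ η : ℝ} (hδ : 0 < δ) (hη : 0 < η) :
    ∀ᶠ n in atTop, 1 - η ≤ (μ n (Metric.ball x₀ δ)).toReal := by
  set gf : EuclideanSpace ℝ (Fin d) → ℝ := fun x => max (1 - dist x x₀ / δ) 0 with hgf
  have hcont : Continuous gf :=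
    (continuous_const.sub ((continuous_id.dist continuous_const).div_const δ)).max
      continuous_const
  have hbd : ∀ x, ‖gf x‖ ≤ 1 := by
    intro x
    rw [Real.norm_eq_abs, abs_le]
    constructor
    · have : (0:ℝ) ≤ gf x := le_max_right _ _
      linarith
    · refine max_le ?_ zero_le_one
      have : 0 ≤ dist x x₀ / δ := div_nonneg dist_nonneg hδ.le
      linarith
  set f : BoundedContinuousFunction (EuclideanSpace ℝ (Fin d)) ℝ :=
    BoundedContinuousFunction.ofNormedAddCommGroup gf hcont 1 hbd with hf
  have hfx : ∀ x, f x = gf x := fun x => rfl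
  have hx0 : f x₀ = 1 := by
    rw [hfx, hgf]; simp
  have h1 : ∀ n, ∫ x, f x ∂(μ n) ≤ (μ n (Metric.ball x₀ δ)).toReal := by
    intro n
    haveI := hμprob n
    have hind : ∫ x, (Metric.ball x₀ δ).indicator (fun _ => (1:ℝ)) x ∂(μ n)
        = (μ n (Metric.ball x₀ δ)).toReal := by
      rw [integral_indicator measurableSet_ball]
      simp
      rfl
    rw [← hind]
    refine integral_mono (f.integrable (μ n)) ((integrable_const 1).indicator measurableSet_ball)
      fun x => ?_
    rw [hfx]
    by_cases hx : x ∈ Metric.ball x₀ δ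
    · rw [Set.indicator_of_mem hx]
      refine max_le ?_ zero_le_one
      have : 0 ≤ dist x x₀ / δ := div_nonneg dist_nonneg hδ.le
      linarith
    · rw [Set.indicator_of_notMem hx]
      have hx' : δ ≤ dist x x₀ := by
        by_contra h
        exact hx (Metric.mem_ball.mpr (by linarith))
      have h1 : 1 ≤ dist x x₀ / δ := (one_le_div hδ).mpr hx'
      exact max_le (by linarith) le_rfl
  have h2 := hweak f
  rw [hx0] at h2
  have h3 : ∀ᶠ n in atTop, 1 - η < ∫ x, f x ∂(μ n) :=
    h2.eventually (eventually_gt_nhds (by linarith))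
  filter_upwards [h3] with n hn
  exact hn.le.trans (h1 n)

/-- Γ-liminf: for compact `Ω ⊆ ℝ^d`, `x₀ ∈ Ω`, `p, q > 0`, `s = p/d`,
`α = s/(1+s)`, `β = 1/(1+s)`, `A = (1+s)(2/s)^α` and integrable `ρ : Ω → [0,∞)`:
for every sequence `ε_n → 0⁺` and every sequence of probability measures `μ_n` on `Ω`
converging weakly to `δ_{x₀}`, `liminf_n G_{ε_n}(μ_n) ≥ A ∫_Ω ρ^β |x−x₀|^{αq} dx`. -/
theorem gamma_liminf_inequality
    (d : ℕ) (hd : 0 < d)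
    (Ω : Set (EuclideanSpace ℝ (Fin d))) (hΩ : IsCompact Ω)
    (x₀ : EuclideanSpace ℝ (Fin d)) (hx₀ : x₀ ∈ Ω)
    (p q s α β A : ℝ) (hp : 0 < p) (hq : 0 < q)
    (hs : s = p / d) (hα : α = s / (1 + s)) (hβ : β = 1 / (1 + s))
    (hA : A = (1 + s) * (2 / s) ^ α)
    (ρ : EuclideanSpace ℝ (Fin d) → ℝ) (hρ0 : ∀ x ∈ Ω, 0 ≤ ρ x)
    (hρint : IntegrableOn ρ Ω)
    (G : ℝ → Measure (EuclideanSpace ℝ (Fin d)) → ℝ≥0∞)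
    (hG : ∀ ε ν, G ε ν =
      ENNReal.ofReal (ε ^ α) *
          (∫⁻ x in Ω, ENNReal.ofReal (ρ x) * (ν.rnDeriv volume x) ^ (-s))
        + ENNReal.ofReal (ε ^ (-β)) *
          ∫⁻ x, ∫⁻ y, ENNReal.ofReal (dist x y ^ q) ∂ν ∂ν)
    (ε : ℕ → ℝ) (hεpos : ∀ n, 0 < ε n) (hεlim : Tendsto ε atTop (𝓝 0))
    (μ : ℕ → Measure (EuclideanSpace ℝ (Fin d)))
    (hμprob : ∀ n, IsProbabilityMeasure (μ n)) (hμΩ : ∀ n, μ n Ωᶜ = 0)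
    (hweak : ∀ f : BoundedContinuousFunction (EuclideanSpace ℝ (Fin d)) ℝ,
      Tendsto (fun n => ∫ x, f x ∂(μ n)) atTop (𝓝 (f x₀))) :
    ENNReal.ofReal A * (∫⁻ x in Ω, ENNReal.ofReal (ρ x ^ β * dist x x₀ ^ (α * q)))
      ≤ liminf (fun n => G (ε n) (μ n)) atTop := by
  have hd' : (0:ℝ) < d := by exact_mod_cast hd
  have hs0 : 0 < s := hs ▸ div_pos hp hd'
  have h1s : (0:ℝ) < 1 + s := by linarith
  have hα0 : 0 < α := by rw [hα]; positivity
  have hβ0 : 0 < β := by rw [hβ]; positivity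
  have hαq : 0 < α * q := mul_pos hα0 hq
  have hΩm : MeasurableSet Ω := hΩ.isClosed.measurableSet
  have hρm : AEMeasurable ρ (volume.restrict Ω) := hρint.aestronglyMeasurable.aemeasurable
  set δk : ℕ → ℝ := fun k => 1/((k:ℝ)+1) with hδk
  have hδkpos : ∀ k, 0 < δk k := fun k => by positivity
  have hδklim : Tendsto δk atTop (𝓝 0) := tendsto_one_div_add_atTop_nhds_zero_nat
  set C : ℕ → ℝ≥0∞ := fun k =>
    ENNReal.ofReal ((1+s) * s^(-α) * (2*(1 - δk k))^α) with hC
  set I : ℕ → ℝ≥0∞ := fun k =>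
    ∫⁻ x in Ω, ENNReal.ofReal (ρ x ^ β * (max (dist x x₀ - δk k) 0) ^ (α*q)) with hI
  -- step 1 : each C k * I k is below the liminf
  have step1 : ∀ k, C k * I k ≤ liminf (fun n => G (ε n) (μ n)) atTop := by
    intro k
    refine le_liminf_of_le (by isBoundedDefault) ?_
    filter_upwards [ball_mass μ hμprob hweak (hδkpos k) (hδkpos k)] with n hn
    haveI := hμprob n
    have hper := perN hΩm x₀ hq hs0 hα hβ hρ0 hρm (μ n)
      (ε := ε n) (δ := δk k) (hεpos n) (hδkpos k)
    rw [hG]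
    refine le_trans ?_ hper
    refine mul_le_mul_left (ENNReal.ofReal_le_ofReal ?_) _
    refine mul_le_mul_of_nonneg_left ?_ (by positivity)
    have hk1 : δk k ≤ 1 := by
      rw [hδk]
      rw [div_le_one (by positivity)]
      simp
    refine Real.rpow_le_rpow (by linarith) (by linarith) hα0.le
  -- step 2 : convergence of C k * I k
  have hClim : Tendsto C atTop (𝓝 (ENNReal.ofReal ((1+s) * s^(-α) * 2^α))) := by
    refine (ENNReal.continuous_ofReal.tendsto _).comp ?_
    have h2k : Tendsto (fun k => 2*(1 - δk k)) atTop (𝓝 2) := by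
      have := ((tendsto_const_nhds (α := ℕ) (x := (1:ℝ))).sub hδklim).const_mul 2
      simpa using this
    have h2kα : Tendsto (fun k => (2*(1 - δk k))^α) atTop (𝓝 (2^α)) :=
      ((Real.continuousAt_rpow_const 2 α (Or.inl (by norm_num))).tendsto).comp h2k
    exact h2kα.const_mul _
  have hIlim : Tendsto I atTop
      (𝓝 (∫⁻ x in Ω, ENNReal.ofReal (ρ x ^ β * dist x x₀ ^ (α * q)))) := by
    refine lintegral_tendsto_of_tendsto_of_monotone ?_ ?_ ?_
    · intro k
      refine AEMeasurable.ennreal_ofReal ?_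
      refine (hρm.pow aemeasurable_const).mul ?_
      exact ((((continuous_id.dist continuous_const).sub continuous_const).max
        continuous_const).measurable.pow measurable_const).aemeasurable
    · filter_upwards [ae_restrict_of_forall_mem hΩm hρ0] with x hρx
      intro k l hkl
      refine ENNReal.ofReal_le_ofReal ?_
      refine mul_le_mul_of_nonneg_left ?_ (Real.rpow_nonneg hρx _)
      refine Real.rpow_le_rpow (le_max_right _ _) ?_ hαq.le
      refine max_le_max ?_ le_rfl
      have : δk l ≤ δk k := by
        rw [hδk]
        exact one_div_le_one_div_of_le (by positivity) (by exact_mod_cast by linarith)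
      linarith
    · filter_upwards [ae_restrict_of_forall_mem hΩm hρ0] with x hρx
      refine (ENNReal.continuous_ofReal.tendsto _).comp ?_
      refine Tendsto.const_mul _ ?_
      have hmax : Tendsto (fun k => max (dist x x₀ - δk k) 0) atTop (𝓝 (dist x x₀)) := by
        have := ((tendsto_const_nhds (α := ℕ) (x := dist x x₀)).sub hδklim).max
          (tendsto_const_nhds (x := (0:ℝ)))
        simpa [max_eq_left dist_nonneg] using this
      exact ((Real.continuousAt_rpow_const _ _ (Or.inr hαq.le)).tendsto).comp hmax
  have hmul : Tendsto (fun k => C k * I k) atTop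
      (𝓝 (ENNReal.ofReal ((1+s) * s^(-α) * 2^α) *
        ∫⁻ x in Ω, ENNReal.ofReal (ρ x ^ β * dist x x₀ ^ (α * q)))) :=
    ENNReal.Tendsto.mul hClim (Or.inl (by
      simp only [ne_eq, ENNReal.ofReal_eq_zero, not_le]
      positivity)) hIlim (Or.inr ENNReal.ofReal_ne_top)
  have hfinal := le_of_tendsto hmul (Eventually.of_forall step1)
  refine le_trans (le_of_eq ?_) hfinal
  congr 1
  rw [hA, Real.div_rpow (by norm_num) hs0.le, Real.rpow_neg hs0.le]
  have : s^α ≠ 0 := (Real.rpow_pos_of_pos hs0 _).ne'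
  field_simp
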